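/- Let A ∈ ℝ and let z₁,…,z₅ : ℝ → ℝ be differentiable functions satisfying the system (8): z₁' = 2z₄, z₂' = z₃, z₃' = −z₁ − 16A z₂ − 16 z₂², z₄' = −A z₁ + (1/3) z₅ − (8/3) z₁ z₂, z₅' = −6A z₄ + 2 z₁ z₃ − 8 z₂ z₄. Then F₂ = 9A² z₁² + z₅² + 6A z₁ z₅ − 2 z₁³ − 24A z₁² z₂ − 12 z₁ z₃ z₄ + 24 z₂ z₄² − 16 z₁² z₂² is a constant of motion: d/dt F₂(z(t)) = 0. -/

import Mathlib

/-- F₂ is a constant of motion of the five-dimensional system (8). -/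
theorem F2_constant_of_motion (A : ℝ) (z₁ z₂ z₃ z₄ z₅ : ℝ → ℝ)
    (hz₁ : Differentiable ℝ z₁) (hz₂ : Differentiable ℝ z₂)
    (hz₃ : Differentiable ℝ z₃) (hz₄ : Differentiable ℝ z₄)
    (hz₅ : Differentiable ℝ z₅)
    (h₁ : ∀ t, deriv z₁ t = 2 * z₄ t)
    (h₂ : ∀ t, deriv z₂ t = z₃ t)
    (h₃ : ∀ t, deriv z₃ t = -z₁ t - 16 * A * z₂ t - 16 * (z₂ t)^2)
    (h₄ : ∀ t, deriv z₄ t = -A * z₁ t + (1/3) * z₅ t - (8/3) * z₁ t * z₂ t)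
    (h₅ : ∀ t, deriv z₅ t = -(6 * A) * z₄ t + 2 * z₁ t * z₃ t - 8 * z₂ t * z₄ t) :
    ∀ t, deriv (fun s =>
      9 * A^2 * (z₁ s)^2 + (z₅ s)^2 + 6 * A * z₁ s * z₅ s - 2 * (z₁ s)^3
        - 24 * A * (z₁ s)^2 * z₂ s - 12 * z₁ s * z₃ s * z₄ s
        + 24 * z₂ s * (z₄ s)^2 - 16 * (z₁ s)^2 * (z₂ s)^2) t = 0 := by
  intro t
  have H1 : HasDerivAt z₁ (2 * z₄ t) t := h₁ t ▸ (hz₁ t).hasDerivAt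
  have H2 : HasDerivAt z₂ (z₃ t) t := h₂ t ▸ (hz₂ t).hasDerivAt
  have H3 : HasDerivAt z₃ (-z₁ t - 16 * A * z₂ t - 16 * (z₂ t)^2) t :=
    h₃ t ▸ (hz₃ t).hasDerivAt
  have H4 : HasDerivAt z₄ (-A * z₁ t + (1/3) * z₅ t - (8/3) * z₁ t * z₂ t) t :=
    h₄ t ▸ (hz₄ t).hasDerivAt
  have H5 : HasDerivAt z₅ (-(6 * A) * z₄ t + 2 * z₁ t * z₃ t - 8 * z₂ t * z₄ t) t :=
    h₅ t ▸ (hz₅ t).hasDerivAt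
  have H : HasDerivAt (fun s =>
      9 * A^2 * (z₁ s)^2 + (z₅ s)^2 + 6 * A * z₁ s * z₅ s - 2 * (z₁ s)^3
        - 24 * A * (z₁ s)^2 * z₂ s - 12 * z₁ s * z₃ s * z₄ s
        + 24 * z₂ s * (z₄ s)^2 - 16 * (z₁ s)^2 * (z₂ s)^2) 0 t := by
    have T := ((((((((H1.pow 2).const_mul (9*A^2)).add (H5.pow 2)).add
        ((H1.const_mul (6*A)).mul H5)).sub ((H1.pow 3).const_mul 2)).sub
        (((H1.pow 2).const_mul (24*A)).mul H2)).sub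
        (((H1.const_mul 12).mul H3).mul H4)).add
        ((H2.const_mul 24).mul (H4.pow 2))).sub
        (((H1.pow 2).const_mul 16).mul (H2.pow 2))
    convert T using 1
    · rfl
    · rfl
    · rfl
    · simp only [Pi.pow_apply, Pi.mul_apply]
      ring
  exact H.deriv
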